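/- Let 0 < γ ≤ 1 and let ω be the γ-norm on ℝ² given by ω(x₁,x₂) = |x₁| if |x₁| > |x₂| and ω(x₁,x₂) = (|(x₁+x₂)/2|^γ + |(x₁−x₂)/2|^γ)^{1/γ} otherwise. Then E_γ = (ℝ², ω) satisfies condition (Q_γ): for all u, v ∈ [0,∞)², sup_{x ∈ Q_{u,v}} ω(x)^γ ≤ ω(u)^γ + ω(v)^γ, where Q_{u,v} = ∏_{i=1}^2 [M_i − m_i, M_i + m_i], m_i = min(u_i,v_i), M_i = max(u_i,v_i). -/
import Mathlib

noncomputable section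

/-- The rotated γ-norm `ω` on `ℝ²`. -/
def omg (γ : ℝ) : ℝ × ℝ → ℝ := fun x =>
  if |x.2| < |x.1| then |x.1|
  else (|(x.1 + x.2)/2| ^ γ + |(x.1 - x.2)/2| ^ γ) ^ (1/γ)

/-- Concavity transfer: for `0 ≤ b ≤ a`, `0 ≤ c`, `(a+c)^γ + b^γ ≤ a^γ + (b+c)^γ`. -/
lemma omg_L3 {γ : ℝ} (h0 : 0 < γ) (h1 : γ ≤ 1) {a b c : ℝ} (hb : 0 ≤ b) (hba : b ≤ a)
    (hc : 0 ≤ c) : (a + c) ^ γ + b ^ γ ≤ a ^ γ + (b + c) ^ γ := by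
  have hcon := Real.concaveOn_rpow h0.le h1
  rcases eq_or_lt_of_le hc with rfl | hc'
  · simp
  have ha : 0 ≤ a := hb.trans hba
  set D : ℝ := a + c - b with hD
  have hDpos : 0 < D := by simp only [hD]; linarith
  have hmem1 : b ∈ Set.Ici (0:ℝ) := hb
  have hmem2 : (a + c) ∈ Set.Ici (0:ℝ) := by simp; linarith
  have hw1 : (0:ℝ) ≤ c / D := div_nonneg hc hDpos.le
  have hw2 : (0:ℝ) ≤ (a - b) / D := div_nonneg (by linarith) hDpos.le
  have hws : c / D + (a - b) / D = 1 := by field_simp; simp only [hD]; ring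
  have hws' : (a - b) / D + c / D = 1 := by field_simp; simp only [hD]; ring
  have h1' := hcon.2 hmem1 hmem2 hw1 hw2 hws
  have h2' := hcon.2 hmem1 hmem2 hw2 hw1 hws'
  simp only [smul_eq_mul] at h1' h2'
  have e1 : c / D * b + (a - b) / D * (a + c) = a := by field_simp; ring
  have e2 : (a - b) / D * b + c / D * (a + c) = b + c := by field_simp; ring
  rw [e1] at h1'
  rw [e2] at h2'
  have hmul : (c / D + (a - b) / D) * (b ^ γ + (a + c) ^ γ) = b ^ γ + (a + c) ^ γ := by
    rw [hws]; ring
  nlinarith [h1', h2', hmul]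

/-- Subadditivity of `t ↦ t ^ γ` for `0 < γ ≤ 1` on nonnegative reals. -/
lemma omg_L1 {γ : ℝ} (h0 : 0 < γ) (h1 : γ ≤ 1) {a b : ℝ} (ha : 0 ≤ a) (hb : 0 ≤ b) :
    (a + b) ^ γ ≤ a ^ γ + b ^ γ := by
  have := omg_L3 h0 h1 (le_refl (0:ℝ)) ha hb
  simpa [Real.zero_rpow h0.ne'] using this

/-- Key optimization step. -/
lemma omg_KEY {γ : ℝ} (h0 : 0 < γ) (h1 : γ ≤ 1) {s d P Q : ℝ} (hd : 0 ≤ d) (hs : 0 ≤ s)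
    (hdP : d ≤ P) (hdQ : d ≤ Q) (hsum : s + d ≤ P + Q) :
    s ^ γ + d ^ γ ≤ P ^ γ + Q ^ γ := by
  rcases le_or_gt s P with h | h
  · exact add_le_add (Real.rpow_le_rpow hs h h0.le) (Real.rpow_le_rpow hd hdQ h0.le)
  · have h3 := omg_L3 h0 h1 hd hdP (c := s - P) (by linarith)
    have h2 : (d + (s - P)) ^ γ ≤ Q ^ γ :=
      Real.rpow_le_rpow (by linarith) (by linarith) h0.le
    have e : P + (s - P) = s := by ring
    rw [e] at h3
    linarith

/-- The value of `ω ^ γ` on nonnegative vectors. -/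
def omg_W (γ a b : ℝ) : ℝ := if b < a then a ^ γ else ((a + b)/2) ^ γ + ((b - a)/2) ^ γ

lemma omg_pow_eq {γ : ℝ} (h0 : 0 < γ) {w : ℝ × ℝ} (h1 : 0 ≤ w.1) (h2 : 0 ≤ w.2) :
    omg γ w ^ γ = omg_W γ w.1 w.2 := by
  simp only [omg, omg_W, abs_of_nonneg h1, abs_of_nonneg h2]
  split_ifs with h
  · rfl
  · push_neg at h
    rw [abs_of_nonneg (by linarith : (0:ℝ) ≤ (w.1 + w.2)/2),
      abs_of_nonpos (by linarith : (w.1 - w.2)/2 ≤ 0),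
      (by ring : -((w.1 - w.2)/2) = (w.2 - w.1)/2),
      ← Real.rpow_mul (add_nonneg (Real.rpow_nonneg (by linarith) _)
        (Real.rpow_nonneg (by linarith) _)), one_div, inv_mul_cancel₀ h0.ne', Real.rpow_one]

lemma omg_Wlb {γ : ℝ} (h0 : 0 < γ) (h1 : γ ≤ 1) {a b : ℝ} (ha : 0 ≤ a) (hb : 0 ≤ b) :
    a ^ γ ≤ omg_W γ a b := by
  unfold omg_W
  split_ifs with h
  · exact le_rfl
  · push_neg at h
    calc a ^ γ ≤ ((a + b)/2 + (b - a)/2) ^ γ :=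
          Real.rpow_le_rpow ha (by linarith) h0.le
      _ ≤ _ := omg_L1 h0 h1 (by linarith) (by linarith)

lemma omg_core {γ : ℝ} (h0 : 0 < γ) (h1 : γ ≤ 1) {u₁ u₂ v₁ v₂ x₁ x₂ : ℝ}
    (hu1 : 0 ≤ u₁) (hu2 : 0 ≤ u₂) (hv1 : 0 ≤ v₁) (hv2 : 0 ≤ v₂)
    (ha : u₁ - v₁ ≤ x₁) (hb : v₁ - u₁ ≤ x₁) (hc : x₂ ≤ u₂ + v₂) (hxx : x₁ ≤ x₂)
    (hx1 : 0 ≤ x₁) :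
    ((x₁ + x₂)/2) ^ γ + ((x₂ - x₁)/2) ^ γ ≤ omg_W γ u₁ u₂ + omg_W γ v₁ v₂ := by
  have hd : (0:ℝ) ≤ (x₂ - x₁)/2 := by linarith
  have hs : (0:ℝ) ≤ (x₁ + x₂)/2 := by linarith
  unfold omg_W
  split_ifs with h h' h'
  · -- u₂ < u₁, v₂ < v₁
    exact omg_KEY h0 h1 hd hs (by linarith) (by linarith) (by linarith)
  · -- u₂ < u₁, v₁ ≤ v₂
    push_neg at h'
    have step := omg_KEY h0 h1 hd hs (P := u₁ + (v₂ - v₁)/2) (Q := (v₁ + v₂)/2)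
      (by linarith) (by linarith) (by linarith)
    have expand : (u₁ + (v₂ - v₁)/2) ^ γ ≤ u₁ ^ γ + ((v₂ - v₁)/2) ^ γ :=
      omg_L1 h0 h1 hu1 (by linarith)
    linarith
  · -- u₁ ≤ u₂, v₂ < v₁
    push_neg at h
    have step := omg_KEY h0 h1 hd hs (P := v₁ + (u₂ - u₁)/2) (Q := (u₁ + u₂)/2)
      (by linarith) (by linarith) (by linarith)
    have expand : (v₁ + (u₂ - u₁)/2) ^ γ ≤ v₁ ^ γ + ((u₂ - u₁)/2) ^ γ :=
      omg_L1 h0 h1 hv1 (by linarith)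
    linarith
  · -- u₁ ≤ u₂, v₁ ≤ v₂
    push_neg at h h'
    rcases le_total v₁ u₁ with hcmp | hcmp
    · have step := omg_KEY h0 h1 hd hs (P := (u₁ + u₂)/2 + (v₂ - v₁)/2)
        (Q := (u₂ - u₁)/2 + (v₁ + v₂)/2) (by linarith) (by linarith) (by linarith)
      have e1 : ((u₁ + u₂)/2 + (v₂ - v₁)/2) ^ γ ≤ ((u₁ + u₂)/2) ^ γ + ((v₂ - v₁)/2) ^ γ :=
        omg_L1 h0 h1 (by linarith) (by linarith)
      have e2 : ((u₂ - u₁)/2 + (v₁ + v₂)/2) ^ γ ≤ ((u₂ - u₁)/2) ^ γ + ((v₁ + v₂)/2) ^ γ :=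
        omg_L1 h0 h1 (by linarith) (by linarith)
      linarith
    · have step := omg_KEY h0 h1 hd hs (P := (v₁ + v₂)/2 + (u₂ - u₁)/2)
        (Q := (v₂ - v₁)/2 + (u₁ + u₂)/2) (by linarith) (by linarith) (by linarith)
      have e1 : ((v₁ + v₂)/2 + (u₂ - u₁)/2) ^ γ ≤ ((v₁ + v₂)/2) ^ γ + ((u₂ - u₁)/2) ^ γ :=
        omg_L1 h0 h1 (by linarith) (by linarith)
      have e2 : ((v₂ - v₁)/2 + (u₁ + u₂)/2) ^ γ ≤ ((v₂ - v₁)/2) ^ γ + ((u₁ + u₂)/2) ^ γ :=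
        omg_L1 h0 h1 (by linarith) (by linarith)
      linarith

theorem omg_conditionQ (γ : ℝ) (hγ : 0 < γ) (hγ1 : γ ≤ 1)
    (u v : ℝ × ℝ) (hu1 : 0 ≤ u.1) (hu2 : 0 ≤ u.2) (hv1 : 0 ≤ v.1) (hv2 : 0 ≤ v.2)
    (x : ℝ × ℝ)
    (hx1 : max u.1 v.1 - min u.1 v.1 ≤ x.1 ∧ x.1 ≤ max u.1 v.1 + min u.1 v.1)
    (hx2 : max u.2 v.2 - min u.2 v.2 ≤ x.2 ∧ x.2 ≤ max u.2 v.2 + min u.2 v.2) :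
    omg γ x ^ γ ≤ omg γ u ^ γ + omg γ v ^ γ := by
  obtain ⟨hxl1, hxu1⟩ := hx1
  obtain ⟨hxl2, hxu2⟩ := hx2
  have m11 := le_max_left u.1 v.1
  have m12 := le_max_right u.1 v.1
  have m13 := min_le_left u.1 v.1
  have m14 := min_le_right u.1 v.1
  have m15 := max_add_min u.1 v.1
  have m21 := le_max_left u.2 v.2
  have m22 := le_max_right u.2 v.2
  have m23 := min_le_left u.2 v.2
  have m24 := min_le_right u.2 v.2
  have m25 := max_add_min u.2 v.2
  have h11 : u.1 - v.1 ≤ x.1 := by linarith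
  have h12 : v.1 - u.1 ≤ x.1 := by linarith
  have h13 : x.1 ≤ u.1 + v.1 := by linarith
  have h23 : x.2 ≤ u.2 + v.2 := by linarith
  have hx1p : 0 ≤ x.1 := by linarith
  have hx2p : 0 ≤ x.2 := by linarith
  rw [omg_pow_eq hγ hu1 hu2, omg_pow_eq hγ hv1 hv2]
  simp only [omg, abs_of_nonneg hx1p, abs_of_nonneg hx2p]
  split_ifs with h
  · calc x.1 ^ γ ≤ (u.1 + v.1) ^ γ := Real.rpow_le_rpow hx1p h13 hγ.le
      _ ≤ u.1 ^ γ + v.1 ^ γ := omg_L1 hγ hγ1 hu1 hv1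
      _ ≤ omg_W γ u.1 u.2 + omg_W γ v.1 v.2 :=
          add_le_add (omg_Wlb hγ hγ1 hu1 hu2) (omg_Wlb hγ hγ1 hv1 hv2)
  · push_neg at h
    rw [abs_of_nonneg (by linarith : (0:ℝ) ≤ (x.1 + x.2)/2),
      abs_of_nonpos (by linarith : (x.1 - x.2)/2 ≤ 0),
      (by ring : -((x.1 - x.2)/2) = (x.2 - x.1)/2),
      ← Real.rpow_mul (add_nonneg (Real.rpow_nonneg (by linarith) _)
        (Real.rpow_nonneg (by linarith) _)), one_div, inv_mul_cancel₀ hγ.ne', Real.rpow_one]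
    exact omg_core hγ hγ1 hu1 hu2 hv1 hv2 h11 h12 h23 h hx1p
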